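/- arXiv:1909.05103 — 2 statements merged into one kernel-verified Lean document; each statement's English description precedes it below -/
import Mathlib

section
/- Let x₀ = I + t^{λ_p − λ_{q+1} − N} E_{p,q+1} (a matrix over 𝒪 since λ_p − λ_{q+1} ≥ N). Then there exist matrices g, h ∈ GL_{n+1}(𝒪) such that, as matrices over K, t^{−λ} · x₀ · t^{λ+μ−Nβ∨} = g · t^{μ} · h. (This says the relative position of the lattices [λ] and x₀[λ+μ−Nβ∨] in the affine Grassmannian of PGL_{n+1} equals μ.) -/
open Matrix

noncomputable section

/-- The ring `𝒪 = ℂ[[t]]` of formal power series. -/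
abbrev OO : Type := PowerSeries ℂ

/-- The field `K = ℂ((t))` of formal Laurent series. -/
abbrev KK : Type := LaurentSeries ℂ

/-- `t^k ∈ K` for an integer `k`. -/
def tz (k : ℤ) : KK := HahnSeries.single k 1

/-- The inclusion `𝒪 → K`. -/
def coeO : OO →+* KK := HahnSeries.ofPowerSeries ℤ ℂ

/-- The `GL`-coordinates of the coroot `β∨ = e_p − e_{q+1}` (indices `0`-based). -/
def bcov (p q : ℕ) (i : ℕ) : ℤ := (if i = p then 1 else 0) - (if i = q + 1 then 1 else 0)

lemma tz_mul (a b : ℤ) : tz a * tz b = tz (a + b) := by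
  simp [tz, HahnSeries.single_mul_single]

lemma coeO_X_pow (k : ℕ) : coeO (PowerSeries.X ^ k) = tz k := by
  simp [coeO, tz, HahnSeries.ofPowerSeries_X_pow]

lemma sum_pair_eq {ι R : Type*} [Fintype ι] [DecidableEq ι] [AddCommMonoid R]
    (f : ι → R) (a b : ι) (hab : a ≠ b) (h : ∀ x, x ≠ a → x ≠ b → f x = 0) :
    ∑ x, f x = f a + f b := by
  have h2 : ∑ x ∈ ({a, b} : Finset ι), f x = ∑ x, f x :=
    Finset.sum_subset (Finset.subset_univ _) (fun x _ hx => by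
      simp only [Finset.mem_insert, Finset.mem_singleton, not_or] at hx
      exact h x hx.1 hx.2)
  rw [← h2, Finset.sum_pair hab]

/-- `g`: identity outside the `{P,Q}` block, block `[[0,1],[1,x]]`. -/
def gM {m : ℕ} (P Q : Fin m) (x : OO) : Matrix (Fin m) (Fin m) OO :=
  Matrix.of fun i k =>
    if i = P then (if k = Q then 1 else 0)
    else if i = Q then (if k = P then 1 else 0) + (if k = Q then x else 0)
    else (if k = i then 1 else 0)

/-- A right inverse of `gM`: block `[[-x,1],[1,0]]`. -/
def gM' {m : ℕ} (P Q : Fin m) (x : OO) : Matrix (Fin m) (Fin m) OO :=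
  Matrix.of fun i k =>
    if i = P then (if k = P then -x else 0) + (if k = Q then 1 else 0)
    else if i = Q then (if k = P then 1 else 0)
    else (if k = i then 1 else 0)

/-- `h`: identity outside the `{P,Q}` block, block `[[-1,0],[y,1]]`; self-inverse. -/
def hM {m : ℕ} (P Q : Fin m) (y : OO) : Matrix (Fin m) (Fin m) OO :=
  Matrix.of fun k j =>
    if k = P then (if j = P then -1 else 0)
    else if k = Q then (if j = P then y else 0) + (if j = Q then 1 else 0)
    else (if j = k then 1 else 0)

lemma gM_mul_gM' {m : ℕ} {P Q : Fin m} (hPQ : P ≠ Q) (x : OO) :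
    gM P Q x * gM' P Q x = 1 := by
  rw [← Matrix.ext_iff]
  intro i j
  rw [Matrix.mul_apply]
  rcases eq_or_ne i P with hiP | hiP
  · rw [Finset.sum_eq_single_of_mem Q (Finset.mem_univ _)
      (fun x _ hx => by simp [gM, hiP, hx])]
    rcases eq_or_ne j P with hjP | hjP
    · simp [gM, gM', hiP, hjP, hPQ, hPQ.symm, Matrix.one_apply]
    · simp [gM, gM', hiP, hjP, Ne.symm hjP, hPQ, hPQ.symm, Matrix.one_apply]
  · rcases eq_or_ne i Q with hiQ | hiQ
    · rw [sum_pair_eq _ P Q hPQ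
        (fun x hx1 hx2 => by simp [gM, hiQ, hiP, hPQ.symm, hx1, hx2])]
      rcases eq_or_ne j P with hjP | hjP
      · simp [gM, gM', hiQ, hjP, hPQ, hPQ.symm, Matrix.one_apply]
      · rcases eq_or_ne j Q with hjQ | hjQ
        · simp [gM, gM', hiQ, hjQ, hPQ, hPQ.symm, Matrix.one_apply]
        · simp [gM, gM', hiQ, hjP, hjQ, Ne.symm hjP, Ne.symm hjQ, hPQ, hPQ.symm,
            Matrix.one_apply]
    · rw [Finset.sum_eq_single_of_mem i (Finset.mem_univ _)
        (fun x _ hx => by simp [gM, hiP, hiQ, hx])]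
      rcases eq_or_ne j i with hji | hji
      · simp [gM, gM', hji, hiP, hiQ, Matrix.one_apply]
      · simp [gM, gM', hiP, hiQ, hji, Ne.symm hji, Matrix.one_apply]

lemma hM_mul_hM {m : ℕ} {P Q : Fin m} (hPQ : P ≠ Q) (y : OO) :
    hM P Q y * hM P Q y = 1 := by
  rw [← Matrix.ext_iff]
  intro i j
  rw [Matrix.mul_apply]
  rcases eq_or_ne i P with hiP | hiP
  · rw [Finset.sum_eq_single_of_mem P (Finset.mem_univ _)
      (fun x _ hx => by simp [hM, hiP, hx])]
    rcases eq_or_ne j P with hjP | hjP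
    · simp [hM, hiP, hjP, hPQ, hPQ.symm, Matrix.one_apply]
    · simp [hM, hiP, hjP, Ne.symm hjP, hPQ, hPQ.symm, Matrix.one_apply]
  · rcases eq_or_ne i Q with hiQ | hiQ
    · rw [sum_pair_eq _ P Q hPQ
        (fun x hx1 hx2 => by simp [hM, hiQ, hiP, hPQ.symm, hx1, hx2])]
      rcases eq_or_ne j P with hjP | hjP
      · simp [hM, hiQ, hjP, hPQ, hPQ.symm, Matrix.one_apply]
      · rcases eq_or_ne j Q with hjQ | hjQ
        · simp [hM, hiQ, hjQ, hPQ, hPQ.symm, Matrix.one_apply]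
        · simp [hM, hiQ, hjP, hjQ, Ne.symm hjP, Ne.symm hjQ, hPQ, hPQ.symm,
            Matrix.one_apply]
    · rw [Finset.sum_eq_single_of_mem i (Finset.mem_univ _)
        (fun x _ hx => by simp [hM, hiP, hiQ, hx])]
      rcases eq_or_ne j i with hji | hji
      · simp [hM, hji, hiP, hiQ, Matrix.one_apply]
      · simp [hM, hiP, hiQ, hji, Ne.symm hji, Matrix.one_apply]

/-- with `x₀ = I + t^{λ_p − λ_{q+1} − N} E_{p,q+1}`, there exist
`g, h ∈ GL_{n+1}(𝒪)` with `t^{−λ} x₀ t^{λ+μ−Nβ∨} = g t^{μ} h` over `K`.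
(Indices are `0`-based: rows and columns run through `0,…,n`, and `0 ≤ p ≤ q ≤ n−1`.) -/
theorem stmt0 (n : ℕ) (hn : 1 ≤ n) (N : ℕ) (hN : 1 ≤ N)
    (p q : ℕ) (hpq : p ≤ q) (hq : q < n)
    (lam mu : ℕ → ℤ)
    (hlam : ∀ i j : ℕ, i ≤ j → j ≤ n → lam j ≤ lam i)
    (hmu : ∀ i j : ℕ, i ≤ j → j ≤ n → mu j ≤ mu i)
    (hlamN : (N : ℤ) ≤ lam p - lam (q + 1))
    (hmuN : (N : ℤ) ≤ mu p - mu (q + 1)) :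
    ∃ g h : Matrix (Fin (n+1)) (Fin (n+1)) OO,
      IsUnit g.det ∧ IsUnit h.det ∧
      Matrix.diagonal (fun i : Fin (n+1) => tz (-(lam i))) *
          (1 + Matrix.single (⟨p, by omega⟩ : Fin (n+1)) (⟨q + 1, by omega⟩ : Fin (n+1))
              (tz (lam p - lam (q + 1) - N))) *
          Matrix.diagonal (fun i : Fin (n+1) => tz (lam i + mu i - N * bcov p q i)) =
        g.map coeO * Matrix.diagonal (fun i : Fin (n+1) => tz (mu i)) * h.map coeO := by
  have hpn : p < n + 1 := by omega
  have hqn : q + 1 < n + 1 := by omega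
  have hPQ : (⟨p, hpn⟩ : Fin (n+1)) ≠ ⟨q+1, hqn⟩ := by
    simp only [ne_eq, Fin.mk.injEq]; omega
  have hpq1 : p ≠ q + 1 := by omega
  have hq1p : q + 1 ≠ p := by omega
  refine ⟨gM ⟨p, hpn⟩ ⟨q+1, hqn⟩ (PowerSeries.X ^ N),
    hM ⟨p, hpn⟩ ⟨q+1, hqn⟩ (PowerSeries.X ^ (mu p - mu (q+1) - N).toNat), ?_, ?_, ?_⟩
  · exact IsUnit.of_mul_eq_one _
      (by rw [← Matrix.det_mul, gM_mul_gM' hPQ, Matrix.det_one])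
  · exact IsUnit.of_mul_eq_one _
      (by rw [← Matrix.det_mul, hM_mul_hM hPQ, Matrix.det_one])
  rw [← Matrix.ext_iff]
  intro i j
  conv_rhs => rw [Matrix.mul_apply]
  simp only [Matrix.mul_diagonal, Matrix.diagonal_mul, Matrix.map_apply,
    Matrix.add_apply, Matrix.one_apply, Matrix.single, Matrix.of_apply]
  rcases eq_or_ne i (⟨p, hpn⟩ : Fin (n+1)) with hiP | hiP
  · rw [Finset.sum_eq_single_of_mem (⟨q+1, hqn⟩ : Fin (n+1)) (Finset.mem_univ _)
      (fun x _ hx => by simp [gM, hiP, if_neg hx])]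
    rcases eq_or_ne j (⟨p, hpn⟩ : Fin (n+1)) with hjP | hjP
    · simp [gM, hM, hiP, hjP, apply_ite coeO, coeO_X_pow, hPQ, hPQ.symm, bcov,
        hpq1, hq1p, tz_mul]
      congr 1
      omega
    · rcases eq_or_ne j (⟨q+1, hqn⟩ : Fin (n+1)) with hjQ | hjQ
      · simp [gM, hM, hiP, hjQ, apply_ite coeO, coeO_X_pow, hPQ, hPQ.symm, bcov,
          hpq1, hq1p, tz_mul]
        congr 1
        omega
      · simp [gM, hM, hiP, hjP, hjQ, Ne.symm hjP, Ne.symm hjQ, apply_ite coeO,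
          coeO_X_pow, hPQ, hPQ.symm, tz_mul]
  · rcases eq_or_ne i (⟨q+1, hqn⟩ : Fin (n+1)) with hiQ | hiQ
    · rw [sum_pair_eq _ (⟨p, hpn⟩ : Fin (n+1)) (⟨q+1, hqn⟩ : Fin (n+1)) hPQ
        (fun x hx1 hx2 => by simp [gM, hiQ, hPQ.symm, if_neg hx1, if_neg hx2])]
      rcases eq_or_ne j (⟨p, hpn⟩ : Fin (n+1)) with hjP | hjP
      · simp [gM, hM, hiQ, hjP, apply_ite coeO, coeO_X_pow, hPQ, hPQ.symm, bcov,
          hpq1, hq1p, tz_mul]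
        rw [show ((N:ℤ) + mu (q + 1) + ((mu p - mu (q + 1)).toNat - N : ℕ)) = mu p by omega]
        ring
      · rcases eq_or_ne j (⟨q+1, hqn⟩ : Fin (n+1)) with hjQ | hjQ
        · simp [gM, hM, hiQ, hjQ, apply_ite coeO, coeO_X_pow, hPQ, hPQ.symm, bcov,
            hpq1, hq1p, tz_mul]
          congr 1
          omega
        · simp [gM, hM, hiQ, hjP, hjQ, Ne.symm hjP, Ne.symm hjQ, apply_ite coeO,
            coeO_X_pow, hPQ, hPQ.symm, tz_mul]
    · rw [Finset.sum_eq_single_of_mem i (Finset.mem_univ _)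
        (fun x _ hx => by simp [gM, hiP, hiQ, hx])]
      have hip' : (i : ℕ) ≠ p := fun h => hiP (Fin.ext h)
      have hiq' : (i : ℕ) ≠ q + 1 := fun h => hiQ (Fin.ext h)
      have hc : ¬((⟨p, hpn⟩ : Fin (n+1)) = i ∧ (⟨q+1, hqn⟩ : Fin (n+1)) = j) :=
        fun h => hiP h.1.symm
      have hc2 : ¬((⟨p, hpn⟩ : Fin (n+1)) = i ∧ (⟨q+1, hqn⟩ : Fin (n+1)) = i) :=
        fun h => hiP h.1.symm
      rcases eq_or_ne j i with hji | hji
      · simp [gM, hM, hji, hiP, hiQ, hc, hc2, apply_ite coeO, bcov, hip', hiq', tz_mul]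
      · simp [gM, hM, hiP, hiQ, hji, Ne.symm hji, hc, hc2, apply_ite coeO, tz_mul]
end
end

section
/- For every a ∈ ℂ with a ≠ 0 and a ≠ 1, there exist matrices g, h ∈ GL_3(𝒪) such that, as matrices over K, t^{−λ} · u(a) · t^{λ} = g · t^{λ} · h. (This says the relative position of the lattices [λ] and u(a)[λ] equals λ = 2ρ∨, so that the triple ξ(a) = ([2ρ∨], u(a)[2ρ∨], [0]) lies in the cyclic convolution variety Gr_{c(2ρ∨,2ρ∨,2ρ∨)} for PGL_3.) -/
open Matrix

noncomputable section

/-- The unipotent matrix `u(a)` with rows `(1, t, a t²)`, `(0, 1, t)`, `(0, 0, 1)`. -/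
def uMat (a : ℂ) : Matrix (Fin 3) (Fin 3) KK :=
  !![1, tz 1, HahnSeries.single 2 a; 0, 1, tz 1; 0, 0, 1]

lemma single_add' (k : ℤ) (x y : ℂ) :
    (HahnSeries.single k x : KK) + HahnSeries.single k y = HahnSeries.single k (x + y) :=
  ((HahnSeries.single.addMonoidHom k).map_add x y).symm

lemma single_neg' (k : ℤ) (x : ℂ) :
    (HahnSeries.single k (-x) : KK) = -HahnSeries.single k x :=
  (HahnSeries.single.addMonoidHom k).map_neg x

lemma single_sub' (k : ℤ) (x y : ℂ) :
    (HahnSeries.single k (x - y) : KK) = HahnSeries.single k x - HahnSeries.single k y :=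
  (HahnSeries.single.addMonoidHom k).map_sub x y


lemma coeO_C (c : ℂ) : coeO (PowerSeries.C (R := ℂ) c) = HahnSeries.single 0 c := by
  rw [coeO, HahnSeries.ofPowerSeries_C, HahnSeries.C_apply]

lemma coeO_X : coeO PowerSeries.X = HahnSeries.single 1 1 :=
  HahnSeries.ofPowerSeries_X


set_option maxHeartbeats 4000000 in
/-- for `a ≠ 0, 1` there exist `g, h ∈ GL₃(𝒪)` with
`t^{−λ} · u(a) · t^{λ} = g · t^{λ} · h` over `K`, where `λ = (2, 0, −2)`. -/
theorem stmt11 (a : ℂ) (ha0 : a ≠ 0) (ha1 : a ≠ 1) :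
    ∃ g h : Matrix (Fin 3) (Fin 3) OO,
      IsUnit g.det ∧ IsUnit h.det ∧
      Matrix.diagonal ![tz (-2), tz 0, tz 2] * uMat a * Matrix.diagonal ![tz 2, tz 0, tz (-2)] =
        g.map coeO * Matrix.diagonal ![tz 2, tz 0, tz (-2)] * h.map coeO := by
  have h1a : (1 : ℂ) - a ≠ 0 := sub_ne_zero.mpr (Ne.symm ha1)
  refine ⟨!![0, 0, 1;
             0, PowerSeries.C (R := ℂ) (-a⁻¹), PowerSeries.C (R := ℂ) a⁻¹ * PowerSeries.X;
             PowerSeries.C (R := ℂ) (1-a)⁻¹, PowerSeries.C (R := ℂ) (-(a*(1-a))⁻¹) * PowerSeries.X,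
               PowerSeries.C (R := ℂ) a⁻¹ * PowerSeries.X^2],
          !![1, 0, 0;
             PowerSeries.X, PowerSeries.C (R := ℂ) (1-a), 0;
             PowerSeries.X^2, PowerSeries.X, PowerSeries.C (R := ℂ) a], ?_, ?_, ?_⟩
  · rw [PowerSeries.isUnit_iff_constantCoeff]
    simp [Matrix.det_fin_three]
    exact ⟨ha0, h1a⟩
  · rw [PowerSeries.isUnit_iff_constantCoeff]
    simp [Matrix.det_fin_three]
    exact ⟨h1a, ha0⟩
  · have hD2 : (Matrix.diagonal ![tz 2, tz 0, tz (-2)] : Matrix (Fin 3) (Fin 3) KK)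
        = !![tz 2, 0, 0; 0, tz 0, 0; 0, 0, tz (-2)] := by
      ext i j; fin_cases i <;> fin_cases j <;> simp [Matrix.diagonal, Matrix.vecHead, Matrix.vecTail]
    have hDm : (Matrix.diagonal ![tz (-2), tz 0, tz 2] : Matrix (Fin 3) (Fin 3) KK)
        = !![tz (-2), 0, 0; 0, tz 0, 0; 0, 0, tz 2] := by
      ext i j; fin_cases i <;> fin_cases j <;> simp [Matrix.diagonal, Matrix.vecHead, Matrix.vecTail]
    have hg : (!![0, 0, 1;
             0, PowerSeries.C (R := ℂ) (-a⁻¹), PowerSeries.C (R := ℂ) a⁻¹ * PowerSeries.X;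
             PowerSeries.C (R := ℂ) (1-a)⁻¹, PowerSeries.C (R := ℂ) (-(a*(1-a))⁻¹) * PowerSeries.X,
               PowerSeries.C (R := ℂ) a⁻¹ * PowerSeries.X^2] : Matrix (Fin 3) (Fin 3) OO).map coeO
        = !![0, 0, 1;
             0, HahnSeries.single 0 (-a⁻¹), HahnSeries.single 1 a⁻¹;
             HahnSeries.single 0 (1-a)⁻¹, HahnSeries.single 1 (-(a*(1-a))⁻¹),
               HahnSeries.single 2 a⁻¹] := by
      ext i j : 2
      fin_cases i <;> fin_cases j <;>
        simp [Matrix.map_apply, coeO_C, coeO_X, _root_.map_mul, _root_.map_pow,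
          HahnSeries.single_mul_single, single_neg', single_sub']
    have hh : (!![1, 0, 0;
             PowerSeries.X, PowerSeries.C (R := ℂ) (1-a), 0;
             PowerSeries.X^2, PowerSeries.X, PowerSeries.C (R := ℂ) a] :
               Matrix (Fin 3) (Fin 3) OO).map coeO
        = !![1, 0, 0;
             HahnSeries.single 1 1, HahnSeries.single 0 (1-a), 0;
             HahnSeries.single 2 1, HahnSeries.single 1 1, HahnSeries.single 0 a] := by
      ext i j : 2
      fin_cases i <;> fin_cases j <;>
        simp [Matrix.map_apply, coeO_C, coeO_X, _root_.map_mul, _root_.map_pow,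
          HahnSeries.single_mul_single, single_neg', single_sub']
    rw [hD2, hDm, hg, hh, uMat]
    rw [Matrix.mul_fin_three, Matrix.mul_fin_three, Matrix.mul_fin_three, Matrix.mul_fin_three]
    have e1 : a⁻¹ * a = 1 := inv_mul_cancel₀ ha0
    have e2 : -(a⁻¹ * (1 - a)) + a⁻¹ = 1 := by field_simp; ring
    have e4 : (1 - a)⁻¹ + -((1 - a)⁻¹ * a⁻¹) + a⁻¹ = 0 := by field_simp; ring
    have e3 : -((1 - a)⁻¹ * a⁻¹ * (1 - a)) + a⁻¹ = 0 := by field_simp; ring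
    ext i j : 1
    fin_cases i <;> fin_cases j <;>
      simp [tz, HahnSeries.single_mul_single, single_add', Matrix.vecHead, Matrix.vecTail,
        e1, e2, e3, e4, -HahnSeries.single_add, -HahnSeries.single_sub, -HahnSeries.single_neg]
end
end
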